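/- Let p be a prime with p ≡ 13 or 17 (mod 20). Then for all integers n ≥ 0 and all i with (p+1)/2 ≤ i ≤ p − 2, one has ν_p(F_{pn+i+1}) = ν_p(F_{pn + (i mod (p+1)/2) + 1}). -/

import Mathlib

open Polynomial

private lemma val_eq_of {p c x : ℕ} (hp : p.Prime) (hx : x ≠ 0)
    (h1 : p ^ c ∣ x) (h2 : ¬ p ^ (c + 1) ∣ x) : padicValNat p x = c := by
  have e := Nat.factorization_def x hp
  have l1 : c ≤ x.factorization p := (hp.pow_dvd_iff_le_factorization hx).mp h1
  have l2 : ¬ (c + 1 ≤ x.factorization p) :=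
    fun hc => h2 ((hp.pow_dvd_iff_le_factorization hx).mpr hc)
  omega

private lemma rank_dvd_of {p a t : ℕ} (ha : 0 < a) (hpa : p ∣ Nat.fib a)
    (hmin : ∀ s, 0 < s → p ∣ Nat.fib s → a ≤ s)
    (ht : 0 < t) (hpt : p ∣ Nat.fib t) : a ∣ t := by
  have hg : p ∣ Nat.fib (Nat.gcd t a) := by
    rw [Nat.fib_gcd]; exact Nat.dvd_gcd hpt hpa
  have hg0 : 0 < Nat.gcd t a := Nat.gcd_pos_of_pos_left _ ht
  have h1 : a ≤ Nat.gcd t a := hmin _ hg0 hg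
  have h2 : Nat.gcd t a ∣ a := Nat.gcd_dvd_right _ _
  have h3 : Nat.gcd t a = a := Nat.le_antisymm (Nat.le_of_dvd ha h2) h1
  exact h3 ▸ Nat.gcd_dvd_left _ _
private lemma five_not_sq {p : ℕ} (hp : p.Prime) (h : p % 20 = 13 ∨ p % 20 = 17) :
    ¬ IsSquare (5 : ZMod p) := by
  have hsq3 : ¬IsSquare ((3 : ℕ) : ZMod 5) := by decide
  have hsq2 : ¬IsSquare ((2 : ℕ) : ZMod 5) := by decide
  haveI : Fact p.Prime := ⟨hp⟩
  haveI : Fact (Nat.Prime 5) := ⟨by norm_num⟩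
  have hp2 : p ≠ 2 := by omega
  have hiff := ZMod.exists_sq_eq_prime_iff_of_mod_four_eq_one (p := 5) (q := p)
    (by norm_num) hp2
  have h5cast : ((5 : ℕ) : ZMod p) = (5 : ZMod p) := by push_cast; ring
  rw [← h5cast, ← hiff, ← ZMod.natCast_mod]
  rcases h with h' | h'
  · have : p % 5 = 3 := by omega
    rw [this]; exact hsq3
  · have : p % 5 = 2 := by omega
    rw [this]; exact hsq2

private lemma five_pow_half {p : ℕ} (hp : p.Prime) (h : p % 20 = 13 ∨ p % 20 = 17) :
    (5 : ZMod p) ^ (p / 2) = -1 := by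
  haveI : Fact p.Prime := ⟨hp⟩
  have h50 : (5 : ZMod p) ≠ 0 := by
    have hnd : ¬ (p ∣ 5) := by
      intro hd
      have := Nat.le_of_dvd (by norm_num) hd
      omega
    intro h0
    rw [show (5 : ZMod p) = ((5 : ℕ) : ZMod p) by push_cast; ring,
      ZMod.natCast_eq_zero_iff] at h0
    exact hnd h0
  rcases ZMod.pow_div_two_eq_neg_one_or_one p h50 with h1 | h1
  · exact absurd ((ZMod.euler_criterion p h50).mpr h1) (five_not_sq hp h)
  · exact h1
private lemma p_dvd_fib_half {p : ℕ} (hp : p.Prime) (h : p % 20 = 13 ∨ p % 20 = 17) :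
    p ∣ Nat.fib ((p + 1) / 2) := by
  haveI : Fact p.Prime := ⟨hp⟩
  have hp13 : 13 ≤ p := by rcases h with h' | h' <;> omega
  have hpodd : p % 2 = 1 := by omega
  have hp4 : p % 4 = 1 := by omega
  have h5 : ¬ IsSquare (5 : ZMod p) := five_not_sq hp h
  have heul : (5 : ZMod p) ^ (p / 2) = -1 := five_pow_half hp h
  have hirr : Irreducible (X ^ 2 - C (5 : ZMod p)) := by
    apply X_pow_sub_C_irreducible_of_prime Nat.prime_two
    intro b hb
    exact h5 ⟨b, by rw [← hb]; ring⟩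
  haveI : Fact (Irreducible (X ^ 2 - C (5 : ZMod p))) := ⟨hirr⟩
  set K := AdjoinRoot (X ^ 2 - C (5 : ZMod p)) with hKdef
  set r : K := AdjoinRoot.root _ with hrdef
  have hr2 : r ^ 2 = (5 : K) := by
    have h0 := AdjoinRoot.eval₂_root (X ^ 2 - C (5 : ZMod p))
    simpa [eval₂_sub, eval₂_pow, eval₂_X, eval₂_C, sub_eq_zero, map_ofNat] using h0
  haveI : CharP K p := charP_of_injective_algebraMap (algebraMap (ZMod p) K).injective p
  have h2K : (2 : K) ≠ 0 := by
    have h2 : ((2 : ℕ) : K) ≠ 0 := by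
      rw [Ne, CharP.cast_eq_zero_iff K p]
      intro hd; have := Nat.le_of_dvd (by norm_num) hd; omega
    simpa using h2
  have h5K0 : (5 : K) ≠ 0 := by
    have h5' : ((5 : ℕ) : K) ≠ 0 := by
      rw [Ne, CharP.cast_eq_zero_iff K p]
      intro hd; have := Nat.le_of_dvd (by norm_num) hd; omega
    simpa using h5'
  set φ : K := (1 + r) / 2 with hφdef
  set ψ : K := (1 - r) / 2 with hψdef
  have hmul : φ * ψ = -1 := by
    rw [hφdef, hψdef, div_mul_div_comm, div_eq_iff (mul_ne_zero h2K h2K)]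
    linear_combination -hr2
  have hsub : φ - ψ = r := by
    rw [hφdef, hψdef, div_sub_div_same, show (1 + r) - (1 - r) = 2 * r by ring]
    exact mul_div_cancel_left₀ r h2K
  have hφsq : φ ^ 2 = φ + 1 := by
    rw [hφdef]
    rw [div_pow, div_add_one h2K, div_eq_div_iff (pow_ne_zero 2 h2K) h2K]
    linear_combination 2 * hr2
  have hψsq : ψ ^ 2 = ψ + 1 := by
    rw [hψdef]
    rw [div_pow, div_add_one h2K, div_eq_div_iff (pow_ne_zero 2 h2K) h2K]
    linear_combination 2 * hr2
  have binet : ∀ m : ℕ, (Nat.fib m : K) * r = φ ^ m - ψ ^ m := by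
    intro m
    induction m using Nat.twoStepInduction with
    | zero => simp
    | one => simpa using hsub.symm
    | more nn ih1 ih2 =>
      rw [Nat.fib_add_two]
      push_cast
      linear_combination ih1 + ih2 - φ ^ nn * hφsq + ψ ^ nn * hψsq
  have hr_pow : r ^ p = -r := by
    have hrearr : r ^ p = r * (r ^ 2) ^ (p / 2) := by
      rw [← pow_mul, ← pow_succ']
      congr 1
      omega
    have h5pow : (5 : K) ^ (p / 2) = -1 := by
      have hc := congrArg (algebraMap (ZMod p) K) heul
      simp only [map_pow, map_neg, map_one, map_ofNat] at hc
      exact hc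
    rw [hrearr, hr2, h5pow]
    ring
  have h2p : (2 : K) ^ p = 2 := by
    have hzz : ((2 : ZMod p)) ^ p = 2 := ZMod.pow_card 2
    have hc := congrArg (algebraMap (ZMod p) K) hzz
    simp only [map_pow, map_ofNat] at hc
    exact hc
  have hfrob : φ ^ p = ψ := by
    rw [hφdef, hψdef, div_pow, add_pow_char, one_pow, hr_pow, h2p]
    rw [← sub_eq_add_neg]
  have hψp : ψ ^ p = φ := by
    rw [hψdef, hφdef, div_pow, sub_pow_char, one_pow, hr_pow, h2p]
    rw [sub_neg_eq_add]
  set m := (p + 1) / 2 with hm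
  have hm2 : 2 * m = p + 1 := by omega
  have hφp1 : φ ^ (p + 1) = -1 := by
    rw [pow_succ, hfrob, mul_comm]
    exact hmul
  have hφm : (φ ^ m) * (φ ^ m) = -1 := by
    rw [← pow_add, show m + m = p + 1 by omega]
    exact hφp1
  have hprod : (φ ^ m) * (ψ ^ m) = -1 := by
    rw [← mul_pow, hmul]
    exact Odd.neg_one_pow ⟨(m - 1) / 2, by omega⟩
  have hφm0 : φ ^ m ≠ 0 := by
    intro h0
    rw [h0, zero_mul] at hφm
    exact (by norm_num : (0 : K) ≠ -1) hφm
  have heq : ψ ^ m = φ ^ m := mul_left_cancel₀ hφm0 (hprod.trans hφm.symm)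
  have hfib0 : (Nat.fib m : K) * r = 0 := by rw [binet m, heq, sub_self]
  have hrne : r ≠ 0 := by
    intro h0
    rw [h0] at hr2
    exact h5K0 (by rw [← hr2]; ring)
  have hfibK : (Nat.fib m : K) = 0 := by
    rcases mul_eq_zero.mp hfib0 with h' | h'
    · exact h'
    · exact absurd h' hrne
  have hfibZ : ((Nat.fib m : ZMod p)) = 0 := by
    apply (algebraMap (ZMod p) K).injective
    rw [map_natCast, map_zero]
    exact hfibK
  rw [ZMod.natCast_eq_zero_iff] at hfibZ
  exact hfibZ
private lemma fib_key {p b c : ℕ} (hc1 : 1 ≤ c) (hc : p ^ c ∣ Nat.fib (b + 1)) :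
    ∀ j : ℕ,
      ((Nat.fib ((j + 1) * (b + 1)) : ZMod (p ^ (c + 1))) =
        ((j : ZMod (p ^ (c + 1))) + 1) * (Nat.fib (b + 1) : ZMod (p ^ (c + 1))) *
          (Nat.fib (b + 2) : ZMod (p ^ (c + 1))) ^ j) ∧
      ((Nat.fib ((j + 1) * (b + 1) + 1) : ZMod (p ^ (c + 1))) =
        (Nat.fib (b + 2) : ZMod (p ^ (c + 1))) ^ (j + 1)) := by
  set R := ZMod (p ^ (c + 1))
  set A : R := (Nat.fib (b + 1) : R) with hA
  set B : R := (Nat.fib (b + 2) : R) with hB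
  have hA2 : A * A = 0 := by
    have hdvd : p ^ (c + 1) ∣ Nat.fib (b + 1) * Nat.fib (b + 1) :=
      dvd_trans (pow_dvd_pow p (by omega : c + 1 ≤ c + c))
        (by rw [pow_add]; exact mul_dvd_mul hc hc)
    rw [hA, ← Nat.cast_mul, ZMod.natCast_eq_zero_iff]
    exact hdvd
  have hC : (Nat.fib b : R) = B - A := by
    have : Nat.fib (b + 2) = Nat.fib b + Nat.fib (b + 1) := Nat.fib_add_two
    rw [hB, hA, this]
    push_cast
    ring
  intro j
  induction j with
  | zero => constructor <;> simp [hA, hB]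
  | succ j ih =>
    constructor
    · have e1 : (j + 1 + 1) * (b + 1) = (j + 1) * (b + 1) + b + 1 := by ring
      rw [e1, Nat.fib_add]
      push_cast
      rw [ih.1, ih.2, hC]
      linear_combination (-((j : R) + 1) * B ^ j) * hA2
    · have e2 : (j + 1 + 1) * (b + 1) + 1 = (j + 1) * (b + 1) + (b + 1) + 1 := by ring
      rw [e2, Nat.fib_add]
      push_cast
      rw [ih.1, ih.2]
      linear_combination (((j : R) + 1) * B ^ j) * hA2
private lemma fib_val {p b j : ℕ} (hp : p.Prime) (hpb : p ∣ Nat.fib (b + 1))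
    (hj0 : 0 < j) (hpj : ¬ p ∣ j) :
    padicValNat p (Nat.fib (j * (b + 1))) = padicValNat p (Nat.fib (b + 1)) := by
  haveI : Fact p.Prime := ⟨hp⟩
  set c := padicValNat p (Nat.fib (b + 1)) with hcdef
  have hfib0 : Nat.fib (b + 1) ≠ 0 := (Nat.fib_pos.mpr (by omega)).ne'
  have hc1 : 1 ≤ c := one_le_padicValNat_of_dvd hfib0 hpb
  have hcd : p ^ c ∣ Nat.fib (b + 1) := pow_padicValNat_dvd
  have hcd2 : ¬ p ^ (c + 1) ∣ Nat.fib (b + 1) := pow_succ_padicValNat_not_dvd hfib0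
  obtain ⟨j', rfl⟩ : ∃ j'', j = j'' + 1 := ⟨j - 1, by omega⟩
  have key := fib_key hc1 hcd j'
  set x := Nat.fib ((j' + 1) * (b + 1)) with hx
  set y := (j' + 1) * Nat.fib (b + 1) * Nat.fib (b + 2) ^ j' with hy
  have hxy : x ≡ y [MOD p ^ (c + 1)] := by
    rw [← ZMod.natCast_eq_natCast_iff, hy]
    push_cast
    exact key.1
  have hpB : ¬ p ∣ Nat.fib (b + 2) := by
    intro hdB
    have hd1 : p ∣ Nat.gcd (Nat.fib (b + 1)) (Nat.fib (b + 2)) := Nat.dvd_gcd hpb hdB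
    rw [Nat.fib_coprime_fib_succ (b + 1)] at hd1
    exact hp.one_lt.ne' (Nat.dvd_one.mp hd1)
  have hy1 : p ^ c ∣ y := (hcd.mul_left (j' + 1)).mul_right _
  have hy2 : ¬ p ^ (c + 1) ∣ y := by
    intro hdy
    have h1 : Nat.Coprime (p ^ (c + 1)) (j' + 1) :=
      Nat.Coprime.pow_left _ ((hp.coprime_iff_not_dvd).mpr hpj)
    have h2 : Nat.Coprime (p ^ (c + 1)) (Nat.fib (b + 2) ^ j') :=
      Nat.Coprime.pow _ _ ((hp.coprime_iff_not_dvd).mpr hpB)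
    have h3 : p ^ (c + 1) ∣ (j' + 1) * Nat.fib (b + 1) :=
      (Nat.Coprime.dvd_of_dvd_mul_right h2) hdy
    have h4 : p ^ (c + 1) ∣ Nat.fib (b + 1) :=
      (Nat.Coprime.dvd_of_dvd_mul_left h1) h3
    exact hcd2 h4
  have hx0 : x ≠ 0 := (Nat.fib_pos.mpr (by positivity)).ne'
  have hx1 : p ^ c ∣ x :=
    ((hxy.of_dvd (pow_dvd_pow p (by omega))).dvd_iff dvd_rfl).mpr hy1
  have hx2 : ¬ p ^ (c + 1) ∣ x := fun hd => hy2 ((hxy.dvd_iff dvd_rfl).mp hd)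
  exact val_eq_of hp hx0 hx1 hx2
theorem nup_fib_reduce_digit (p : ℕ) (hp : p.Prime)
    (h : p % 20 = 13 ∨ p % 20 = 17) (n i : ℕ)
    (hi1 : (p + 1) / 2 ≤ i) (hi2 : i ≤ p - 2) :
    padicValNat p (Nat.fib (p * n + i + 1)) =
      padicValNat p (Nat.fib (p * n + i % ((p + 1) / 2) + 1)) := by
  haveI : Fact p.Prime := ⟨hp⟩
  have hp13 : 13 ≤ p := by rcases h with h' | h' <;> omega
  set k := (p + 1) / 2 with hk
  have hk2 : 2 * k = p + 1 := by omega
  have hmod : i % k = i - k := by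
    rw [Nat.mod_eq_sub_mod hi1, Nat.mod_eq_of_lt (by omega)]
  rw [hmod]
  have hstepA : p ∣ Nat.fib k := p_dvd_fib_half hp h
  have hex : ∃ t, 0 < t ∧ p ∣ Nat.fib t := ⟨k, by omega, hstepA⟩
  classical
  set a := Nat.find hex with ha
  obtain ⟨ha0, hpa⟩ := Nat.find_spec hex
  rw [← ha] at ha0 hpa
  have hmin : ∀ s, 0 < s → p ∣ Nat.fib s → a ≤ s := fun s hs hps =>
    Nat.find_min' hex ⟨hs, hps⟩
  have hak : a ∣ k := rank_dvd_of ha0 hpa hmin (by omega) hstepA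
  set m1 := p * n + i + 1 with hm1
  set m2 := p * n + (i - k) + 1 with hm2
  have hm1pos : 0 < m1 := by omega
  have hm2pos : 0 < m2 := by omega
  have hd12 : m1 = m2 + k := by omega
  have hpm1 : ¬ p ∣ m1 := by
    intro hd
    have h1 : p ∣ i + 1 := by
      have he : m1 = p * n + (i + 1) := by omega
      rw [he] at hd
      exact (Nat.dvd_add_right (Dvd.intro n rfl)).mp hd
    have := Nat.le_of_dvd (by omega) h1
    omega
  have hpm2 : ¬ p ∣ m2 := by
    intro hd
    have h1 : p ∣ (i - k) + 1 := by
      have he : m2 = p * n + ((i - k) + 1) := by omega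
      rw [he] at hd
      exact (Nat.dvd_add_right (Dvd.intro n rfl)).mp hd
    have := Nat.le_of_dvd (by omega) h1
    omega
  by_cases hdvd : a ∣ m1
  · have hdvd2 : a ∣ m2 := by
      have := Nat.dvd_sub hdvd hak
      rwa [show m1 - k = m2 by omega] at this
    obtain ⟨b, hb⟩ : ∃ b, a = b + 1 := ⟨a - 1, by omega⟩
    rw [hb] at hdvd hdvd2 hpa
    obtain ⟨j1, hj1⟩ := hdvd
    obtain ⟨j2, hj2⟩ := hdvd2
    have hj1pos : 0 < j1 := by
      rcases Nat.eq_zero_or_pos j1 with h0 | h0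
      · rw [h0, Nat.mul_zero] at hj1; omega
      · exact h0
    have hj2pos : 0 < j2 := by
      rcases Nat.eq_zero_or_pos j2 with h0 | h0
      · rw [h0, Nat.mul_zero] at hj2; omega
      · exact h0
    have hpj1 : ¬ p ∣ j1 := by
      intro hd
      exact hpm1 (hj1 ▸ (hd.mul_left (b + 1)))
    have hpj2 : ¬ p ∣ j2 := by
      intro hd
      exact hpm2 (hj2 ▸ (hd.mul_left (b + 1)))
    rw [hj1, hj2, Nat.mul_comm (b + 1) j1, Nat.mul_comm (b + 1) j2,
      fib_val hp hpa hj1pos hpj1, fib_val hp hpa hj2pos hpj2]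
  · have hdvd2 : ¬ a ∣ m2 := fun hd => hdvd (hd12 ▸ Nat.dvd_add hd hak)
    have h1 : ¬ p ∣ Nat.fib m1 := fun hd => hdvd (rank_dvd_of ha0 hpa hmin hm1pos hd)
    have h2 : ¬ p ∣ Nat.fib m2 := fun hd => hdvd2 (rank_dvd_of ha0 hpa hmin hm2pos hd)
    rw [padicValNat.eq_zero_of_not_dvd h1, padicValNat.eq_zero_of_not_dvd h2]
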